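/- Let n ≥ 2 be an integer and let c_1, …, c_{2n−1} and d_k = (−1)^k c_k be as defined. Then for all real numbers p and q: (p − q)²·( p^{2n} + Σ_{k=1}^{2n−1} c_k·p^{2n−k}·q^k + (−1)^n·q^{2n}/(2n+1) ) = p^{2n+2} + Σ_{k=1}^{n} ((−1)^{k+1}/(2k−1))·C(n+1,k)·p^{2n−2k+2}·q^{2k} + (−1)^n·q^{2n+2}/(2n+1) + (c_1 − 2)·p^{2n+1}·q, and (p + q)²·( p^{2n} + Σ_{k=1}^{2n−1} d_k·p^{2n−k}·q^k + (−1)^n·q^{2n}/(2n+1) ) = p^{2n+2} + Σ_{k=1}^{n} ((−1)^{k+1}/(2k−1))·C(n+1,k)·p^{2n−2k+2}·q^{2k} + (−1)^n·q^{2n+2}/(2n+1) + (2 − c_1)·p^{2n+1}·q. -/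

import Mathlib

open Finset

/-- The coefficients `c_k`, `k = 1, …, 2n−1`, of the auxiliary function `h`:
`c₁ = 1/2 + Σ_{j=1}^{n+1} (−1)^{j+1}·((2j−3)/(2(2j−1)))·C(n+1,j)`;
`c_{2m} = Σ_{j=m+1}^{n+1} (−1)^{j+1}·((2j−2m−1)/(2j−1))·C(n+1,j)` for `m = 1,…,n−1`;
`c_{2m−1} = Σ_{j=m+1}^{n+1} (−1)^{j+1}·((2j−2m)/(2j−1))·C(n+1,j)` for `m = 2,…,n`.
(For `k = 2m` and `k = 2m−1` alike, the numerator is `2j−(k+1)` and the summation starts at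
`j = (k+1)/2 + 1` with natural division.) -/
noncomputable def gmchC (n k : ℕ) : ℝ :=
  if k = 1 then
    1 / 2 + ∑ j ∈ Finset.Icc 1 (n + 1),
      (-1 : ℝ) ^ (j + 1) * ((2 * (j : ℝ) - 3) / (2 * (2 * (j : ℝ) - 1))) * ((n + 1).choose j : ℝ)
  else
    ∑ j ∈ Finset.Icc ((k + 1) / 2 + 1) (n + 1),
      (-1 : ℝ) ^ (j + 1) * ((2 * (j : ℝ) - ((k : ℝ) + 1)) / (2 * (j : ℝ) - 1)) *
        ((n + 1).choose j : ℝ)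

/-- The coefficients `d_k = (−1)^k·c_k`, `k = 1, …, 2n−1`. -/
noncomputable def gmchD (n k : ℕ) : ℝ := (-1 : ℝ) ^ k * gmchC n k

noncomputable def gG (n k : ℕ) : ℝ :=
  ∑ j ∈ Finset.Icc ((k + 1) / 2 + 1) (n + 1),
    (-1 : ℝ) ^ (j + 1) * ((2 * (j : ℝ) - ((k : ℝ) + 1)) / (2 * (j : ℝ) - 1)) *
      ((n + 1).choose j : ℝ)

lemma alt_sum_choose (n : ℕ) :
    ∑ j ∈ Icc 1 (n + 1), (-1 : ℝ) ^ (j + 1) * ((n + 1).choose j : ℝ) = 1 := by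
  have h := add_pow (-1 : ℝ) 1 (n + 1)
  simp only [neg_add_cancel, one_pow, mul_one, zero_pow (Nat.succ_ne_zero n)] at h
  have h2 : ∑ j ∈ range (n + 2), (-1 : ℝ) ^ j * ((n + 1).choose j : ℝ) = 0 := h.symm
  have h3 : range (n + 2) = insert 0 (Icc 1 (n + 1)) := by
    ext x; simp [Nat.lt_succ_iff]; omega
  rw [h3, Finset.sum_insert (by simp)] at h2
  simp only [pow_zero, one_mul, Nat.choose_zero_right, Nat.cast_one] at h2
  have : ∑ j ∈ Icc 1 (n+1), (-1:ℝ)^(j+1) * ((n+1).choose j : ℝ)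
      = - ∑ j ∈ Icc 1 (n+1), (-1:ℝ)^j * ((n+1).choose j : ℝ) := by
    rw [← Finset.sum_neg_distrib]
    exact Finset.sum_congr rfl fun j _ => by ring

  rw [this]; linarith

lemma hins (n : ℕ) (hn : 1 ≤ n) : Icc 1 (n+1) = insert 1 (Icc 2 (n+1)) := by
  ext x; simp; omega

lemma alt_sum_choose' (n : ℕ) (hn : 1 ≤ n) :
    ∑ j ∈ Icc 2 (n + 1), (-1 : ℝ) ^ (j + 1) * ((n + 1).choose j : ℝ) = -(n : ℝ) := by
  have h := alt_sum_choose n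
  rw [hins n hn, Finset.sum_insert (by simp)] at h
  simp only [Nat.choose_one_right] at h
  push_cast at h ⊢
  linarith

lemma gG_one (n : ℕ) (hn : 1 ≤ n) : gmchC n 1 = gG n 1 := by
  rw [gmchC, if_pos rfl, gG]
  norm_num
  rw [hins n hn, Finset.sum_insert (by simp)]
  have hsum : ∑ j ∈ Icc 2 (n+1), (-1:ℝ)^(j+1) * ((2*(j:ℝ)-2)/(2*(j:ℝ)-1)) * ((n+1).choose j : ℝ)
      = ∑ j ∈ Icc 2 (n+1), ((-1:ℝ)^(j+1) * ((2*(j:ℝ)-3)/(2*(2*(j:ℝ)-1))) * ((n+1).choose j : ℝ)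
          + (1/2) * ((-1:ℝ)^(j+1) * ((n+1).choose j : ℝ))) := by
    refine Finset.sum_congr rfl fun j hj => ?_
    simp only [mem_Icc] at hj
    have h2 : (2:ℝ) ≤ (j:ℝ) := by exact_mod_cast hj.1
    have hne : (2*(j:ℝ)-1) ≠ 0 := by nlinarith
    field_simp
    ring
  rw [hsum, Finset.sum_add_distrib, ← Finset.mul_sum, alt_sum_choose' n hn]
  simp only [Nat.choose_one_right]
  push_cast
  ring

lemma gmchC_eq_gG (n : ℕ) (hn : 1 ≤ n) (k : ℕ) : gmchC n k = gG n k := by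
  by_cases hk : k = 1
  · subst hk; exact gG_one n hn
  · rw [gmchC, if_neg hk, gG]

lemma gG_zero (n : ℕ) : gG n 0 = 1 := by
  rw [gG]
  norm_num
  have : ∑ j ∈ Icc 1 (n+1), (-1:ℝ)^(j+1) * ((2*(j:ℝ)-1)/(2*(j:ℝ)-1)) * ((n+1).choose j : ℝ)
      = ∑ j ∈ Icc 1 (n+1), (-1:ℝ)^(j+1) * ((n+1).choose j : ℝ) := by
    refine Finset.sum_congr rfl fun j hj => ?_
    simp only [mem_Icc] at hj
    have h1 : (1:ℝ) ≤ (j:ℝ) := by exact_mod_cast hj.1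
    have hne : (2*(j:ℝ)-1) ≠ 0 := by nlinarith
    rw [div_self hne]
    ring
  rw [this, alt_sum_choose n]

lemma gG_top (n : ℕ) (hn : 1 ≤ n) : gG n (2 * n) = (-1:ℝ)^n / (2*(n:ℝ)+1) := by
  rw [gG, show (2*n+1)/2 + 1 = n+1 by omega, Finset.Icc_self, Finset.sum_singleton,
    Nat.choose_self]
  have hpow : (-1:ℝ)^(n+1+1) = (-1)^n := by rw [pow_succ, pow_succ]; ring
  have hne : (2*(n:ℝ)+1) ≠ 0 := by positivity
  rw [hpow]
  push_cast
  rw [show 2*((n:ℝ)+1) - (2*(n:ℝ)+1) = 1 by ring, show 2*((n:ℝ)+1) - 1 = 2*(n:ℝ)+1 by ring]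
  field_simp

lemma hc2 (n : ℕ) (hn : 1 ≤ n) :
    ∑ j ∈ Icc 1 (n+1), (-1:ℝ)^(j+1) * (2*(j:ℝ)/(2*(j:ℝ)-1)) * ((n+1).choose j : ℝ)
      = 2 - gG n 1 := by
  have hg : gG n 1 = ∑ j ∈ Icc 1 (n+1),
      (-1:ℝ)^(j+1) * ((2*(j:ℝ)-2)/(2*(j:ℝ)-1)) * ((n+1).choose j : ℝ) := by
    rw [gG]
    norm_num
    rw [hins n hn, Finset.sum_insert (by simp)]
    norm_num
  have hcomb : ∑ j ∈ Icc 1 (n+1), ((-1:ℝ)^(j+1) * (2*(j:ℝ)/(2*(j:ℝ)-1)) * ((n+1).choose j : ℝ)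
        + (-1:ℝ)^(j+1) * ((2*(j:ℝ)-2)/(2*(j:ℝ)-1)) * ((n+1).choose j : ℝ))
      = ∑ j ∈ Icc 1 (n+1), 2 * ((-1:ℝ)^(j+1) * ((n+1).choose j : ℝ)) := by
    refine Finset.sum_congr rfl fun j hj => ?_
    simp only [mem_Icc] at hj
    have h1 : (1:ℝ) ≤ (j:ℝ) := by exact_mod_cast hj.1
    have hne : (2*(j:ℝ)-1) ≠ 0 := by nlinarith
    field_simp
    ring
  rw [Finset.sum_add_distrib, ← Finset.mul_sum, alt_sum_choose n] at hcomb
  rw [hg]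
  linarith

lemma keyS' (p q : ℝ) : ∀ j : ℕ, 1 ≤ j →
    (p - q) ^ 2 * ∑ k ∈ range (2 * j - 1), (2 * (j : ℝ) - (k : ℝ) - 1) * p ^ (2 * j - 2 - k) * q ^ k
      = (2 * (j : ℝ) - 1) * p ^ (2 * j) - 2 * (j : ℝ) * p ^ (2 * j - 1) * q + q ^ (2 * j) := by
  intro j
  induction j with
  | zero => omega
  | succ j ih =>
    intro _
    by_cases hj : 1 ≤ j
    · have IH := ih hj
      have hG : (p - q) * ∑ k ∈ range (2 * j), p ^ (2 * j - 1 - k) * q ^ k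
          = p ^ (2 * j) - q ^ (2 * j) := by
        have h := geom_sum₂_mul q p (2 * j)
        have he : ∑ k ∈ range (2 * j), p ^ (2 * j - 1 - k) * q ^ k
            = ∑ i ∈ range (2 * j), q ^ i * p ^ (2 * j - 1 - i) :=
          Finset.sum_congr rfl fun k _ => by ring
        rw [he]
        linear_combination -h
      -- split sum
      rw [show 2 * (j + 1) - 1 = (2 * j - 1) + 1 + 1 by omega, Finset.sum_range_succ,
        Finset.sum_range_succ]
      have hsplit : ∑ k ∈ range (2 * j - 1),
          (2 * ((j : ℝ) + 1) - (k : ℝ) - 1) * p ^ (2 * (j + 1) - 2 - k) * q ^ k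
          = p ^ 2 * (∑ k ∈ range (2 * j - 1),
              (2 * (j : ℝ) - (k : ℝ) - 1) * p ^ (2 * j - 2 - k) * q ^ k)
            + 2 * p * ∑ k ∈ range (2 * j - 1), p ^ (2 * j - 1 - k) * q ^ k := by
        rw [Finset.mul_sum, Finset.mul_sum, ← Finset.sum_add_distrib]
        refine Finset.sum_congr rfl fun k hk => ?_
        simp only [Finset.mem_range] at hk
        rw [show 2 * (j + 1) - 2 - k = 2 + (2 * j - 2 - k) by omega, pow_add,
          show 2 * j - 1 - k = 1 + (2 * j - 2 - k) by omega, pow_add]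
        ring
      push_cast
      rw [hsplit]
      have hG' : ∑ k ∈ range (2 * j), p ^ (2 * j - 1 - k) * q ^ k
          = ∑ k ∈ range (2 * j - 1), p ^ (2 * j - 1 - k) * q ^ k + q ^ (2 * j - 1) := by
        rw [show 2 * j = (2 * j - 1) + 1 by omega, Finset.sum_range_succ]
        simp [show 2*j-1+1 = 2*j by omega]
      rw [hG'] at hG
      rw [show (2*j-1+1 : ℕ) = 2*j by omega, show 2*(j+1)-2-(2*j-1) = 1 by omega,
        show 2*(j+1)-2-(2*j) = 0 by omega, show 2*(j+1) = (2*j-1)+3 by omega]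
      rw [show (2*j+1 : ℕ) = (2*j-1)+2 by omega]
      rw [show (2*j : ℕ) = (2*j-1)+1 by omega] at IH hG ⊢
      push_cast [show ((2*j-1 : ℕ) : ℝ) = 2*(j:ℝ)-1 by push_cast [Nat.cast_sub (by omega : 1 ≤ 2*j)]; ring] at *
      simp only [pow_succ] at *
      linear_combination p^2 * IH + 2 * p * (p - q) * hG
    · have hj0 : j = 0 := by omega
      subst hj0
      norm_num
      ring

lemma main1 (n : ℕ) (hn : 2 ≤ n) (p q : ℝ) :
    (p - q) ^ 2 *
        (p ^ (2 * n) + (∑ k ∈ Finset.Icc 1 (2 * n - 1), gmchC n k * p ^ (2 * n - k) * q ^ k) +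
          (-1 : ℝ) ^ n * q ^ (2 * n) / (2 * (n : ℝ) + 1)) =
      p ^ (2 * n + 2) +
        (∑ k ∈ Finset.Icc 1 n,
          (-1 : ℝ) ^ (k + 1) / (2 * (k : ℝ) - 1) * ((n + 1).choose k : ℝ) *
            p ^ (2 * n - 2 * k + 2) * q ^ (2 * k)) +
        (-1 : ℝ) ^ n * q ^ (2 * n + 2) / (2 * (n : ℝ) + 1) +
        (gmchC n 1 - 2) * p ^ (2 * n + 1) * q := by
  have hn1 : 1 ≤ n := by omega
  simp only [gmchC_eq_gG n hn1]
  -- split lemma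
  have hsplit : ∀ f : ℕ → ℝ, ∑ k ∈ Icc 0 (2*n), f k
      = f 0 + (∑ k ∈ Icc 1 (2*n-1), f k) + f (2*n) := by
    intro f
    rw [show Icc 0 (2*n) = insert 0 (insert (2*n) (Icc 1 (2*n-1))) by ext x; simp; omega,
      Finset.sum_insert (by simp; omega), Finset.sum_insert (by simp; omega)]
    ring
  have hH : p ^ (2 * n) + (∑ k ∈ Icc 1 (2 * n - 1), gG n k * p ^ (2 * n - k) * q ^ k) +
      (-1 : ℝ) ^ n * q ^ (2 * n) / (2 * (n : ℝ) + 1)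
      = ∑ k ∈ Icc 0 (2 * n), gG n k * p ^ (2 * n - k) * q ^ k := by
    rw [hsplit, gG_zero, gG_top n hn1]
    simp only [Nat.sub_zero, Nat.sub_self, pow_zero]
    ring
  rw [hH]
  have hswap : ∑ k ∈ Icc 0 (2*n), gG n k * p^(2*n-k) * q^k
      = ∑ j ∈ Icc 1 (n+1), ∑ k ∈ range (2*j-1),
          (-1:ℝ)^(j+1) * ((2*(j:ℝ) - ((k:ℝ)+1))/(2*(j:ℝ)-1)) * ((n+1).choose j : ℝ)
            * p^(2*n-k) * q^k := by
    simp only [gG, Finset.sum_mul]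
    refine Finset.sum_comm' ?_
    intro k j
    simp only [mem_Icc, mem_range]
    omega
  rw [hswap, Finset.mul_sum]
  have hper : ∀ j ∈ Icc 1 (n+1),
      (p-q)^2 * ∑ k ∈ range (2*j-1),
          (-1:ℝ)^(j+1) * ((2*(j:ℝ) - ((k:ℝ)+1))/(2*(j:ℝ)-1)) * ((n+1).choose j : ℝ)
            * p^(2*n-k) * q^k
      = ((-1:ℝ)^(j+1) * ((n+1).choose j : ℝ)) * p^(2*n+2)
        - ((-1:ℝ)^(j+1) * (2*(j:ℝ)/(2*(j:ℝ)-1)) * ((n+1).choose j : ℝ)) * (p^(2*n+1) * q)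
        + ((-1:ℝ)^(j+1) / (2*(j:ℝ)-1) * ((n+1).choose j : ℝ) * p^(2*n+2-2*j) * q^(2*j)) := by
    intro j hj
    simp only [mem_Icc] at hj
    have hj1 : (1:ℝ) ≤ (j:ℝ) := by exact_mod_cast hj.1
    have hne : (2*(j:ℝ)-1) ≠ 0 := by nlinarith
    have hA : ∑ k ∈ range (2*j-1),
        (-1:ℝ)^(j+1) * ((2*(j:ℝ) - ((k:ℝ)+1))/(2*(j:ℝ)-1)) * ((n+1).choose j : ℝ)
          * p^(2*n-k) * q^k
        = ((-1:ℝ)^(j+1) * ((n+1).choose j : ℝ) / (2*(j:ℝ)-1)) *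
            (p^(2*n+2-2*j) * ∑ k ∈ range (2*j-1), (2*(j:ℝ)-(k:ℝ)-1) * p^(2*j-2-k) * q^k) := by
      rw [Finset.mul_sum, Finset.mul_sum]
      refine Finset.sum_congr rfl fun k hk => ?_
      simp only [mem_range] at hk
      rw [show 2*n - k = (2*n+2-2*j) + (2*j-2-k) by omega, pow_add]
      ring
    rw [hA, show (p-q)^2 * (((-1:ℝ)^(j+1) * ((n+1).choose j : ℝ) / (2*(j:ℝ)-1)) *
            (p^(2*n+2-2*j) * ∑ k ∈ range (2*j-1), (2*(j:ℝ)-(k:ℝ)-1) * p^(2*j-2-k) * q^k))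
        = ((-1:ℝ)^(j+1) * ((n+1).choose j : ℝ) / (2*(j:ℝ)-1)) * p^(2*n+2-2*j) *
            ((p-q)^2 * ∑ k ∈ range (2*j-1), (2*(j:ℝ)-(k:ℝ)-1) * p^(2*j-2-k) * q^k) by ring]
    rw [keyS' p q j hj.1]
    rw [show (2*n+2 : ℕ) = (2*n+2-2*j) + 2*j by omega, pow_add,
      show (2*n+1 : ℕ) = (2*n+2-2*j) + (2*j-1) by omega, pow_add]
    rw [show (2*n+2-2*j) + 2*j - 2*j = 2*n+2-2*j by omega]
    field_simp
    ring
  rw [Finset.sum_congr rfl hper, Finset.sum_add_distrib, Finset.sum_sub_distrib,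
    ← Finset.sum_mul, ← Finset.sum_mul, alt_sum_choose n, hc2 n hn1]
  have h3 : ∑ j ∈ Icc 1 (n+1),
      ((-1:ℝ)^(j+1) / (2*(j:ℝ)-1) * ((n+1).choose j : ℝ) * p^(2*n+2-2*j) * q^(2*j))
      = (∑ k ∈ Icc 1 n, (-1:ℝ)^(k+1) / (2*(k:ℝ)-1) * ((n+1).choose k : ℝ)
          * p^(2*n-2*k+2) * q^(2*k)) + (-1:ℝ)^n * q^(2*n+2) / (2*(n:ℝ)+1) := by
    rw [Finset.sum_Icc_succ_top (by omega)]
    congr 1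
    · refine Finset.sum_congr rfl fun j hj => ?_
      simp only [mem_Icc] at hj
      rw [show 2*n+2-2*j = 2*n-2*j+2 by omega]
    · rw [show 2*n+2-2*(n+1) = 0 by omega, pow_zero, Nat.choose_self]
      have hpow : (-1:ℝ)^(n+1+1) = (-1)^n := by rw [pow_succ, pow_succ]; ring
      have hne : (2*(n:ℝ)+1) ≠ 0 := by positivity
      rw [hpow, show 2*(n+1) = 2*n+2 by ring]
      push_cast
      rw [show 2*((n:ℝ)+1) - 1 = 2*(n:ℝ)+1 by ring]
      field_simp
  rw [h3]
  ring


/-- For an integer `n ≥ 2` and the coefficients `c_k`, `d_k = (−1)^k c_k` as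
defined, for all real `p`, `q`:
`(p − q)²·(p^{2n} + Σ_{k=1}^{2n−1} c_k·p^{2n−k}·q^k + (−1)^n·q^{2n}/(2n+1))
  = p^{2n+2} + Σ_{k=1}^{n} ((−1)^{k+1}/(2k−1))·C(n+1,k)·p^{2n−2k+2}·q^{2k}
    + (−1)^n·q^{2n+2}/(2n+1) + (c₁ − 2)·p^{2n+1}·q`, and
`(p + q)²·(p^{2n} + Σ_{k=1}^{2n−1} d_k·p^{2n−k}·q^k + (−1)^n·q^{2n}/(2n+1))
  = p^{2n+2} + Σ_{k=1}^{n} ((−1)^{k+1}/(2k−1))·C(n+1,k)·p^{2n−2k+2}·q^{2k}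
    + (−1)^n·q^{2n+2}/(2n+1) + (2 − c₁)·p^{2n+1}·q`. -/
theorem stmt8 (n : ℕ) (hn : 2 ≤ n) (p q : ℝ) :
    (p - q) ^ 2 *
        (p ^ (2 * n) + (∑ k ∈ Finset.Icc 1 (2 * n - 1), gmchC n k * p ^ (2 * n - k) * q ^ k) +
          (-1 : ℝ) ^ n * q ^ (2 * n) / (2 * (n : ℝ) + 1)) =
      p ^ (2 * n + 2) +
        (∑ k ∈ Finset.Icc 1 n,
          (-1 : ℝ) ^ (k + 1) / (2 * (k : ℝ) - 1) * ((n + 1).choose k : ℝ) *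
            p ^ (2 * n - 2 * k + 2) * q ^ (2 * k)) +
        (-1 : ℝ) ^ n * q ^ (2 * n + 2) / (2 * (n : ℝ) + 1) +
        (gmchC n 1 - 2) * p ^ (2 * n + 1) * q ∧
    (p + q) ^ 2 *
        (p ^ (2 * n) + (∑ k ∈ Finset.Icc 1 (2 * n - 1), gmchD n k * p ^ (2 * n - k) * q ^ k) +
          (-1 : ℝ) ^ n * q ^ (2 * n) / (2 * (n : ℝ) + 1)) =
      p ^ (2 * n + 2) +
        (∑ k ∈ Finset.Icc 1 n,
          (-1 : ℝ) ^ (k + 1) / (2 * (k : ℝ) - 1) * ((n + 1).choose k : ℝ) *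
            p ^ (2 * n - 2 * k + 2) * q ^ (2 * k)) +
        (-1 : ℝ) ^ n * q ^ (2 * n + 2) / (2 * (n : ℝ) + 1) +
        (2 - gmchC n 1) * p ^ (2 * n + 1) * q := by
  constructor
  · exact main1 n hn p q
  · have h := main1 n hn p (-q)
    have e1 : ∑ k ∈ Icc 1 (2*n-1), gmchC n k * p ^ (2*n-k) * (-q) ^ k
        = ∑ k ∈ Icc 1 (2*n-1), gmchD n k * p ^ (2*n-k) * q ^ k := by
      refine Finset.sum_congr rfl fun k _ => ?_
      rw [gmchD, neg_pow]
      ring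
    have e2 : ∑ k ∈ Icc 1 n, (-1:ℝ)^(k+1) / (2*(k:ℝ)-1) * ((n+1).choose k : ℝ)
          * p^(2*n-2*k+2) * (-q)^(2*k)
        = ∑ k ∈ Icc 1 n, (-1:ℝ)^(k+1) / (2*(k:ℝ)-1) * ((n+1).choose k : ℝ)
          * p^(2*n-2*k+2) * q^(2*k) := by
      refine Finset.sum_congr rfl fun k _ => ?_
      rw [Even.neg_pow (even_two_mul k)]
    rw [e1, e2, Even.neg_pow (even_two_mul n), show 2*n+2 = 2*(n+1) by ring,
      Even.neg_pow (even_two_mul (n+1))] at h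
    rw [show 2*n+2 = 2*(n+1) by ring]
    linear_combination h
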